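/- arXiv:2401.10527 — 2 statements merged into one kernel-verified Lean document; each statement's English description precedes it below -/
import Mathlib

section
/- Let U be the syndrome table afforded by e and τ, with ω(e) ≤ t, 1 ≤ t ≤ ⌊r₁/2⌋ and t ≤ ⌊r₂/2⌋. Let l ∈ ℕ×ℕ be of the form l = (l₁, 0) with l₁ > 2t−1, or l = (0, l₂) with l₂ > 2t−1, and let F be a minimal set of polynomials for u^l. Then f[U]_l = 0 for every f ∈ F. -/
/-- A monomial order on `ℕ × ℕ`: a linear well-order compatible with addition that
refines the componentwise partial order. -/
structure MonomialOrder2 where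
  le : ℕ × ℕ → ℕ × ℕ → Prop
  le_refl : ∀ a, le a a
  le_trans : ∀ a b c, le a b → le b c → le a c
  le_antisymm : ∀ a b, le a b → le b a → a = b
  le_total : ∀ a b, le a b ∨ le b a
  wf : WellFounded (fun a b : ℕ × ℕ => le a b ∧ a ≠ b)
  add_right : ∀ a b k, le a b → le (a + k) (b + k)
  refines : ∀ a b : ℕ × ℕ, a.1 ≤ b.1 → a.2 ≤ b.2 → le a b

/-- Strict version of the monomial order. -/
def MonomialOrder2.lt (T : MonomialOrder2) (a b : ℕ × ℕ) : Prop :=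
  T.le a b ∧ a ≠ b

section Defs

variable {L : Type*} [Field L]

/-- `IsLP T f s` says `s` is the leading power product exponent of `f` w.r.t. `T`. -/
def IsLP (T : MonomialOrder2) (f : AddMonoidAlgebra L (ℕ × ℕ)) (s : ℕ × ℕ) : Prop :=
  s ∈ f.coeff.support ∧ ∀ m ∈ f.coeff.support, T.le m s

/-- `recEval U f s n` is `f[U]_n`, where `s` is the leading power product exponent of `f`. -/
noncomputable def recEval (U : ℕ × ℕ → L) (f : AddMonoidAlgebra L (ℕ × ℕ))
    (s n : ℕ × ℕ) : L :=
  if s.1 ≤ n.1 ∧ s.2 ≤ n.2 then ∑ m ∈ f.coeff.support, f.coeff m * U (m + n - s) else 0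

/-- `Lambda T U l` is `Λ(u^l)`, the set of nonzero polynomials valid at all
`n` with `LP f ⪯ n` and `n <_T l`. -/
def Lambda (T : MonomialOrder2) (U : ℕ × ℕ → L) (l : ℕ × ℕ) :
    Set (AddMonoidAlgebra L (ℕ × ℕ)) :=
  { f | f ≠ 0 ∧ ∀ s n : ℕ × ℕ, IsLP T f s → s.1 ≤ n.1 → s.2 ≤ n.2 → T.lt n l →
      recEval U f s n = 0 }

/-- `𝔏(U)`: nonzero polynomials generating the whole array `U`. -/
def LambdaU (T : MonomialOrder2) (U : ℕ × ℕ → L) :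
    Set (AddMonoidAlgebra L (ℕ × ℕ)) :=
  { f | f ≠ 0 ∧ ∀ (s n : ℕ × ℕ), IsLP T f s → recEval U f s n = 0 }

/-- The footprint `Δ(U)` of the ideal of linear recurring relations of `U`. -/
def footprint (T : MonomialOrder2) (U : ℕ × ℕ → L) : Set (ℕ × ℕ) :=
  { n | ∀ f s, f ∈ LambdaU T U → IsLP T f s → ¬(s.1 ≤ n.1 ∧ s.2 ≤ n.2) }

/-- A doubly periodic array of period `r₁ × r₂`. -/
def DoublyPeriodic (r₁ r₂ : ℕ) (U : ℕ × ℕ → L) : Prop :=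
  ∀ n m : ℕ × ℕ, n.1 % r₁ = m.1 % r₁ → n.2 % r₂ = m.2 % r₂ → U n = U m

/-- Evaluation of a bivariate polynomial with coefficients in `L` at `(x, y)`. -/
noncomputable def evalAtL (f : AddMonoidAlgebra L (ℕ × ℕ)) (x y : L) : L :=
  ∑ m ∈ f.coeff.support, f.coeff m * x ^ m.1 * y ^ m.2

end Defs

/-- Evaluation of a bivariate polynomial with coefficients in `F` at a point of `L`. -/
noncomputable def evalAt {F L : Type*} [Field F] [Field L] [Algebra F L]
    (e : AddMonoidAlgebra F (ℕ × ℕ)) (x y : L) : L :=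
  ∑ s ∈ e.coeff.support, algebraMap F L (e.coeff s) * x ^ s.1 * y ^ s.2

/-- The index box `I = {0,…,r₁−1} × {0,…,r₂−1}`. -/
def Ibox (r₁ r₂ : ℕ) : Set (ℕ × ℕ) := { p | p.1 < r₁ ∧ p.2 < r₂ }

/-- `s^(1),…,s^(d)` (0-indexed: `s 0, …, s (d-1)`) is a sequence of defining points. -/
def IsDefPoints (d : ℕ) (s : ℕ → ℕ × ℕ) : Prop :=
  0 < d ∧ (∀ i j, i < j → j < d → (s j).1 < (s i).1) ∧
    (∀ i j, i < j → j < d → (s i).2 < (s j).2) ∧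
    (s (d - 1)).1 = 0 ∧ (s 0).2 = 0

/-- The delta-set of a sequence of defining points. -/
def deltaSet (d : ℕ) (s : ℕ → ℕ × ℕ) : Set (ℕ × ℕ) :=
  { m | ∃ i, i + 1 < d ∧ m.1 + 1 ≤ (s i).1 ∧ m.2 + 1 ≤ (s (i + 1)).2 }

/-- `IsMinimalSet T U l d s f`: `{f 0, …, f (d-1)}` is a minimal set of polynomials
for `u^l`, with defining points `s 0, …, s (d-1)`. -/
def IsMinimalSet {L : Type*} [Field L] (T : MonomialOrder2) (U : ℕ × ℕ → L) (l : ℕ × ℕ)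
    (d : ℕ) (s : ℕ → ℕ × ℕ) (f : ℕ → AddMonoidAlgebra L (ℕ × ℕ)) : Prop :=
  IsDefPoints d s ∧
    (∀ i, i < d → f i ∈ Lambda T U l ∧ IsLP T (f i) (s i)) ∧
    (∀ g sg, IsLP T g sg → sg ∈ deltaSet d s → g ∉ Lambda T U l)

/-- The set of indexes `𝒮(t)`. -/
def Sset (t : ℕ) : Set (ℕ × ℕ) :=
  { p | (p.1 = 0 ∧ p.2 ≤ 2 * t - 1) ∨ (p.2 = 0 ∧ p.1 ≤ 2 * t - 1) ∨
      (1 ≤ p.1 ∧ 1 ≤ p.2 ∧ p.1 + p.2 ≤ t) }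



lemma vanish {L : Type*} [Field L] (B : Finset L) :
    ∀ (N : ℕ) (c : L → L), B.card ≤ N →
      (∀ k < N, ∑ β ∈ B, c β * β ^ k = 0) → ∀ β ∈ B, c β = 0 := by
  induction B using Finset.strongInduction with
  | _ B ih =>
    intro N c hcard hz β hβ
    classical
    have hN : 0 < N := lt_of_lt_of_le (Finset.card_pos.mpr ⟨β, hβ⟩) hcard
    have herase : ∀ x ∈ B.erase β, c x = 0 := by
      intro x hx
      have hsub : B.erase β ⊂ B := Finset.erase_ssubset hβ
      have hsum : ∀ k, k + 1 ≤ N → ∑ x ∈ B.erase β, c x * x ^ k = - (c β * β ^ k) := by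
        intro k hk
        have h0 := hz k (by omega)
        rw [← Finset.sum_erase_add _ _ hβ] at h0
        linear_combination h0
      have key : ∀ k < N - 1, ∑ x ∈ B.erase β, (c x * (x - β)) * x ^ k = 0 := by
        intro k hk
        have e1 : ∑ x ∈ B.erase β, (c x * (x - β)) * x ^ k
            = (∑ x ∈ B.erase β, c x * x ^ (k+1)) - β * ∑ x ∈ B.erase β, c x * x ^ k := by
          rw [Finset.mul_sum, ← Finset.sum_sub_distrib]
          apply Finset.sum_congr rfl
          intro x _
          ring
        rw [e1, hsum (k+1) (by omega), hsum k (by omega)]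
        ring
      have := ih (B.erase β) hsub (N - 1) (fun x => c x * (x - β))
        (by have := Finset.card_erase_of_mem hβ; omega) key x hx
      have hxβ : x - β ≠ 0 := sub_ne_zero.mpr (Finset.ne_of_mem_erase hx)
      exact (mul_eq_zero.mp this).resolve_right hxβ
    have h0 := hz 0 hN
    rw [← Finset.sum_erase_add _ _ hβ, Finset.sum_eq_zero (fun x hx => by
      rw [herase x hx]; ring)] at h0
    simpa using h0
section Axis
variable {L : Type*} [Field L]

lemma axis_lemma (T : MonomialOrder2) (U : ℕ × ℕ → L) (t : ℕ) (l s : ℕ × ℕ)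
    (hl2 : l.2 = 0) (hl1 : 2 * t ≤ l.1) (hs2 : s.2 = 0) (hs1 : s.1 ≤ t)
    (B : Finset L) (hB : B.card ≤ t) (φ : L → ℕ → L)
    (hU : ∀ n : ℕ × ℕ, U n = ∑ β ∈ B, φ β n.2 * β ^ n.1)
    (f : AddMonoidAlgebra L (ℕ × ℕ)) (hf : f ∈ Lambda T U l) (hLP : IsLP T f s) :
    recEval U f s l = 0 := by
  set c : L → L := fun β => ∑ m ∈ f.coeff.support, f.coeff m * φ β m.2 * β ^ m.1 with hc
  have key : ∀ k : ℕ, ∑ m ∈ f.coeff.support, f.coeff m * U (m + (s.1 + k, 0) - s)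
      = ∑ β ∈ B, c β * β ^ k := by
    intro k
    have hpt : ∀ m : ℕ × ℕ, m + (s.1 + k, 0) - s = (m.1 + k, m.2) := by
      intro m
      have h1 : (m + (s.1 + k, 0) - s).1 = m.1 + k := by
        simp [Prod.fst_add, Prod.fst_sub]
        omega
      have h2 : (m + (s.1 + k, 0) - s).2 = m.2 := by
        simp [Prod.snd_add, Prod.snd_sub]
        omega
      exact Prod.ext h1 h2
    calc ∑ m ∈ f.coeff.support, f.coeff m * U (m + (s.1 + k, 0) - s)
        = ∑ m ∈ f.coeff.support, ∑ β ∈ B, f.coeff m * φ β m.2 * β ^ m.1 * β ^ k := by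
          apply Finset.sum_congr rfl
          intro m _
          rw [hpt m, hU (m.1 + k, m.2)]
          rw [Finset.mul_sum]
          apply Finset.sum_congr rfl
          intro β _
          simp only [pow_add]
          ring
      _ = ∑ β ∈ B, c β * β ^ k := by
          rw [Finset.sum_comm]
          apply Finset.sum_congr rfl
          intro β _
          rw [hc]
          simp only [Finset.sum_mul]
  have zeros : ∀ k < l.1 - s.1, ∑ β ∈ B, c β * β ^ k = 0 := by
    intro k hk
    rw [← key k]
    have hrec := hf.2 s (s.1 + k, 0) hLP (by simp) (by omega)
      ⟨T.refines _ _ (by simp; omega) (by simp), by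
        intro h
        have := congrArg Prod.fst h
        simp at this
        omega⟩
    rw [recEval, if_pos ⟨by simp, by omega⟩] at hrec
    exact hrec
  have czero := vanish B (l.1 - s.1) c (by omega) zeros
  rw [recEval, if_pos ⟨by omega, by omega⟩]
  have hleq : l = (s.1 + (l.1 - s.1), 0) := Prod.ext (by omega) hl2
  rw [hleq, key (l.1 - s.1)]
  exact Finset.sum_eq_zero fun β hβ => by rw [czero β hβ, zero_mul]

end Axis
section Swap
variable {L : Type*} [Field L]

/-- The swapped monomial order. -/
def swapT (T : MonomialOrder2) : MonomialOrder2 where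
  le a b := T.le a.swap b.swap
  le_refl a := T.le_refl a.swap
  le_trans a b c h1 h2 := T.le_trans _ _ _ h1 h2
  le_antisymm a b h1 h2 := Prod.swap_injective (T.le_antisymm _ _ h1 h2)
  le_total a b := T.le_total a.swap b.swap
  wf := by
    have : Subrelation (fun a b : ℕ × ℕ => T.le a.swap b.swap ∧ a ≠ b)
        (InvImage (fun a b : ℕ × ℕ => T.le a b ∧ a ≠ b) Prod.swap) := by
      intro a b h
      exact ⟨h.1, fun hh => h.2 (Prod.swap_injective hh)⟩
    exact Subrelation.wf this (InvImage.wf _ T.wf)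
  add_right a b k h := by
    have := T.add_right a.swap b.swap k.swap h
    simpa using this
  refines a b h1 h2 := T.refines a.swap b.swap h2 h1

/-- Swap the variables of a bivariate polynomial. -/
noncomputable def Fswap (f : AddMonoidAlgebra L (ℕ × ℕ)) : AddMonoidAlgebra L (ℕ × ℕ) :=
  ⟨Finsupp.embDomain ⟨Prod.swap, Prod.swap_injective⟩ f.coeff⟩

lemma Fswap_apply (f : AddMonoidAlgebra L (ℕ × ℕ)) (m : ℕ × ℕ) :
    (Fswap f).coeff m = f.coeff m.swap := by
  have := Finsupp.embDomain_apply_self ⟨Prod.swap, Prod.swap_injective⟩ f.coeff m.swap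
  conv_lhs => rw [← Prod.swap_swap m]
  exact this

lemma Fswap_support (f : AddMonoidAlgebra L (ℕ × ℕ)) :
    (Fswap f).coeff.support = f.coeff.support.map ⟨Prod.swap, Prod.swap_injective⟩ :=
  Finsupp.support_embDomain _ _

lemma Fswap_ne_zero {f : AddMonoidAlgebra L (ℕ × ℕ)} (hf : f ≠ 0) : Fswap f ≠ 0 := by
  intro h
  apply hf
  ext m
  have := Fswap_apply f m.swap
  rw [h] at this
  simpa using this.symm

lemma swap_comb (m n s : ℕ × ℕ) : m.swap + n.swap - s.swap = (m + n - s).swap := by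
  exact Prod.ext rfl rfl

lemma recEval_swap (U : ℕ × ℕ → L) (f : AddMonoidAlgebra L (ℕ × ℕ)) (s n : ℕ × ℕ) :
    recEval (fun x => U x.swap) (Fswap f) s.swap n.swap = recEval U f s n := by
  rw [recEval, recEval]
  by_cases h : s.1 ≤ n.1 ∧ s.2 ≤ n.2
  · rw [if_pos ⟨h.2, h.1⟩, if_pos h]
    rw [Fswap_support, Finset.sum_map]
    apply Finset.sum_congr rfl
    intro m hm
    show (Fswap f).coeff m.swap * U (m.swap + n.swap - s.swap).swap = f.coeff m * U (m + n - s)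
    have h1 : (Fswap f).coeff m.swap = f.coeff m := by rw [Fswap_apply]; simp
    rw [h1, swap_comb]
    simp
  · rw [if_neg (fun hh => h ⟨hh.2, hh.1⟩), if_neg h]

lemma isLP_swap_of {T : MonomialOrder2} {f : AddMonoidAlgebra L (ℕ × ℕ)} {s : ℕ × ℕ}
    (h : IsLP T f s) : IsLP (swapT T) (Fswap f) s.swap := by
  constructor
  · rw [Finsupp.mem_support_iff, Fswap_apply]
    simpa [Finsupp.mem_support_iff] using h.1
  · intro m hm
    rw [Finsupp.mem_support_iff, Fswap_apply] at hm
    have hmem : m.swap ∈ f.coeff.support := Finsupp.mem_support_iff.mpr hm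
    have := h.2 m.swap hmem
    show T.le m.swap s.swap.swap
    simpa using this

lemma isLP_of_swap {T : MonomialOrder2} {f : AddMonoidAlgebra L (ℕ × ℕ)} {s : ℕ × ℕ}
    (h : IsLP (swapT T) (Fswap f) s) : IsLP T f s.swap := by
  constructor
  · rw [Finsupp.mem_support_iff]
    have := h.1
    rw [Finsupp.mem_support_iff, Fswap_apply] at this
    simpa using this
  · intro m hm
    have hmem : m.swap ∈ (Fswap f).coeff.support := by
      rw [Finsupp.mem_support_iff, Fswap_apply]
      simpa [Finsupp.mem_support_iff] using hm
    have := h.2 m.swap hmem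
    show T.le m s.swap
    simpa [swapT] using this

lemma lambda_swap_of {T : MonomialOrder2} {U : ℕ × ℕ → L} {l : ℕ × ℕ}
    {f : AddMonoidAlgebra L (ℕ × ℕ)} (hf : f ∈ Lambda T U l) :
    Fswap f ∈ Lambda (swapT T) (fun x => U x.swap) l.swap := by
  refine ⟨Fswap_ne_zero hf.1, ?_⟩
  intro s' n' hLP' h1 h2 hlt
  have hLP : IsLP T f s'.swap := isLP_of_swap hLP'
  have hrec := hf.2 s'.swap n'.swap hLP h2 h1
    ⟨by simpa [swapT, MonomialOrder2.lt] using hlt.1,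
     fun hh => hlt.2 (by rw [← hh, Prod.swap_swap])⟩
  calc recEval (fun x => U x.swap) (Fswap f) s' n'
      = recEval (fun x => U x.swap) (Fswap f) s'.swap.swap n'.swap.swap := by simp
    _ = recEval U f s'.swap n'.swap := recEval_swap U f s'.swap n'.swap
    _ = 0 := hrec

lemma lambda_of_swap {T : MonomialOrder2} {U : ℕ × ℕ → L} {l : ℕ × ℕ}
    {f : AddMonoidAlgebra L (ℕ × ℕ)}
    (hf : Fswap f ∈ Lambda (swapT T) (fun x => U x.swap) l.swap) :
    f ∈ Lambda T U l := by
  refine ⟨?_, ?_⟩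
  · intro h
    exact hf.1 (by rw [h]; ext m; rw [Fswap_apply]; simp)
  · intro s n hLP h1 h2 hlt
    have hLP' : IsLP (swapT T) (Fswap f) s.swap := isLP_swap_of hLP
    have hrec := hf.2 s.swap n.swap hLP' h2 h1
      ⟨by simpa [swapT, MonomialOrder2.lt] using hlt.1,
       fun hh => hlt.2 (Prod.swap_injective hh)⟩
    rw [recEval_swap] at hrec
    exact hrec

end Swap
section Annih
variable {L : Type*} [Field L]

lemma isLP_unique {T : MonomialOrder2} {f : AddMonoidAlgebra L (ℕ × ℕ)} {s s' : ℕ × ℕ}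
    (h : IsLP T f s) (h' : IsLP T f s') : s = s' :=
  T.le_antisymm _ _ (h'.2 s h.1) (h.2 s' h'.1)

/-- Existence of a pure `X₁`-polynomial annihilating the whole array. -/
lemma annih1 (T : MonomialOrder2) (U : ℕ × ℕ → L) (B : Finset L) (φ : L → ℕ → L)
    (hU : ∀ n : ℕ × ℕ, U n = ∑ β ∈ B, φ β n.2 * β ^ n.1) :
    ∃ p : AddMonoidAlgebra L (ℕ × ℕ), (∀ l, p ∈ Lambda T U l) ∧ IsLP T p (B.card, 0) := by
  classical
  set P : Polynomial L := ∏ β ∈ B, (Polynomial.X - Polynomial.C β) with hP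
  have hmonic : P.Monic := Polynomial.monic_prod_of_monic _ _
    (fun β _ => Polynomial.monic_X_sub_C β)
  have hdeg : P.natDegree = B.card := by
    rw [hP, Polynomial.natDegree_prod _ _ (fun β _ => Polynomial.X_sub_C_ne_zero β)]
    simp [Polynomial.natDegree_X_sub_C]
  set emb : ℕ ↪ ℕ × ℕ := ⟨fun j => (j, 0), fun a b h => congrArg Prod.fst h⟩ with hemb
  set p : AddMonoidAlgebra L (ℕ × ℕ) := ⟨Finsupp.embDomain emb P.toFinsupp.coeff⟩ with hp
  have happ : ∀ j : ℕ, p.coeff (j, 0) = P.coeff j := fun j =>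
    Finsupp.embDomain_apply_self emb P.toFinsupp.coeff j
  have hsupp : p.coeff.support = P.support.map emb := Finsupp.support_embDomain _ _
  have hne : p ≠ 0 := by
    intro h
    have := happ P.natDegree
    rw [h, hmonic.coeff_natDegree] at this
    simp at this
  have hLP : IsLP T p (B.card, 0) := by
    constructor
    · rw [Finsupp.mem_support_iff]
      have : (B.card, 0) = ((P.natDegree : ℕ), (0:ℕ)) := by rw [hdeg]
      rw [this, happ, hmonic.coeff_natDegree]
      exact one_ne_zero
    · intro m hm
      rw [hsupp, Finset.mem_map] at hm
      obtain ⟨j, hj, rfl⟩ := hm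
      have hjle : j ≤ P.natDegree := Polynomial.le_natDegree_of_mem_supp j hj
      exact T.refines _ _ (show j ≤ B.card by omega) (show 0 ≤ 0 from le_refl 0)
  refine ⟨p, fun l => ⟨hne, ?_⟩, hLP⟩
  intro s' n hLP' hs1 hs2 _
  have hs' : s' = (B.card, 0) := isLP_unique hLP' hLP
  subst hs'
  rw [recEval, if_pos ⟨hs1, hs2⟩]
  rw [hsupp, Finset.sum_map]
  have hpt : ∀ j : ℕ, (emb j) + n - ((B.card : ℕ), (0:ℕ)) = (j + (n.1 - B.card), n.2) := by
    intro j
    apply Prod.ext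
    · show j + n.1 - B.card = j + (n.1 - B.card)
      omega
    · show 0 + n.2 - 0 = n.2
      omega
  calc ∑ j ∈ P.support, p.coeff (emb j) * U (emb j + n - ((B.card : ℕ), (0:ℕ)))
      = ∑ j ∈ P.support, ∑ β ∈ B, φ β n.2 * β ^ (n.1 - B.card) * (P.coeff j * β ^ j) := by
        apply Finset.sum_congr rfl
        intro j _
        have h1 : p.coeff (emb j) = P.coeff j := happ j
        rw [h1, hpt j, hU]
        rw [Finset.mul_sum]
        apply Finset.sum_congr rfl
        intro β _
        simp only [pow_add]
        ring
    _ = ∑ β ∈ B, φ β n.2 * β ^ (n.1 - B.card) * (∑ j ∈ P.support, P.coeff j * β ^ j) := by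
        rw [Finset.sum_comm]
        apply Finset.sum_congr rfl
        intro β _
        rw [Finset.mul_sum]
    _ = 0 := by
        apply Finset.sum_eq_zero
        intro β hβ
        have heval : ∑ j ∈ P.support, P.coeff j * β ^ j = P.eval β := by
          rw [Polynomial.eval_eq_sum]
          rfl
        rw [heval]
        have : P.eval β = 0 := by
          rw [hP, Polynomial.eval_prod]
          exact Finset.prod_eq_zero hβ (by simp)
        rw [this, mul_zero]

end Annih
section Spectral

lemma spectral {F L : Type*} [Field F] [Field L] [Algebra F L]
    (e : AddMonoidAlgebra F (ℕ × ℕ)) (α₁ α₂ : L) (τ : ℕ × ℕ) (U : ℕ × ℕ → L)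
    (hU : ∀ n : ℕ × ℕ, U n = evalAt e (α₁ ^ (τ.1 + n.1)) (α₂ ^ (τ.2 + n.2))) :
    ∃ B : Finset L, ∃ φ : L → ℕ → L, B.card ≤ e.coeff.support.card ∧
      ∀ n : ℕ × ℕ, U n = ∑ β ∈ B, φ β n.2 * β ^ n.1 := by
  classical
  refine ⟨e.coeff.support.image (fun x => α₁ ^ x.1),
    fun β k => ∑ x ∈ e.coeff.support.filter (fun x => α₁ ^ x.1 = β),
      algebraMap F L (e.coeff x) * α₁ ^ (τ.1 * x.1) * α₂ ^ ((τ.2 + k) * x.2),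
    Finset.card_image_le, ?_⟩
  intro n
  rw [hU n, evalAt]
  rw [← Finset.sum_fiberwise_of_maps_to (g := fun x : ℕ × ℕ => α₁ ^ x.1)
    (fun x hx => Finset.mem_image.mpr ⟨x, hx, rfl⟩)
    (fun x => algebraMap F L (e.coeff x) * (α₁ ^ (τ.1 + n.1)) ^ x.1 * (α₂ ^ (τ.2 + n.2)) ^ x.2)]
  apply Finset.sum_congr rfl
  intro β hβ
  rw [Finset.sum_mul]
  apply Finset.sum_congr rfl
  intro x hx
  have hx' : α₁ ^ x.1 = β := (Finset.mem_filter.mp hx).2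
  rw [← hx']
  rw [← pow_mul, ← pow_mul, ← pow_mul]
  rw [show (τ.1 + n.1) * x.1 = τ.1 * x.1 + x.1 * n.1 by ring, pow_add]
  ring

lemma evalAt_Fswap {F L : Type*} [Field F] [Field L] [Algebra F L]
    (e : AddMonoidAlgebra F (ℕ × ℕ)) (x y : L) :
    evalAt (Fswap e) x y = evalAt e y x := by
  rw [evalAt, evalAt, Fswap_support, Finset.sum_map]
  apply Finset.sum_congr rfl
  intro m hm
  show algebraMap F L ((Fswap e).coeff m.swap) * x ^ m.swap.1 * y ^ m.swap.2 = _
  rw [Fswap_apply]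
  simp
  ring

end Spectral
/-- if `l = (l₁, 0)` with `l₁ > 2t−1`, or `l = (0, l₂)` with
`l₂ > 2t−1`, then `f[U]_l = 0` for every `f` in a minimal set for `u^l`. -/
theorem stmt_10 (T : MonomialOrder2) {F L : Type*} [Field F] [Fintype F] [Field L]
    [Algebra F L] (r₁ r₂ t : ℕ) (ht : 1 ≤ t) (ht₁ : t ≤ r₁ / 2) (ht₂ : t ≤ r₂ / 2)
    (hq : Nat.Coprime (r₁ * r₂) (Fintype.card F))
    (α₁ α₂ : L) (hα₁ : IsPrimitiveRoot α₁ r₁) (hα₂ : IsPrimitiveRoot α₂ r₂)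
    (e : AddMonoidAlgebra F (ℕ × ℕ)) (he : ↑e.coeff.support ⊆ Ibox r₁ r₂)
    (hω : e.coeff.support.card ≤ t)
    (τ : ℕ × ℕ) (hτ : τ ∈ Ibox r₁ r₂) (U : ℕ × ℕ → L)
    (hU : ∀ n : ℕ × ℕ, U n = evalAt e (α₁ ^ (τ.1 + n.1)) (α₂ ^ (τ.2 + n.2)))
    (l : ℕ × ℕ) (hl : (l.2 = 0 ∧ 2 * t - 1 < l.1) ∨ (l.1 = 0 ∧ 2 * t - 1 < l.2))
    (d : ℕ) (s : ℕ → ℕ × ℕ) (f : ℕ → AddMonoidAlgebra L (ℕ × ℕ))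
    (hmin : IsMinimalSet T U l d s f) :
    ∀ i, i < d → recEval U (f i) (s i) l = 0 := by
  classical
  obtain ⟨hdp, hmem, hmax⟩ := hmin
  obtain ⟨hd0, hmono1, hmono2, hlast1, hfirst2⟩ := hdp
  intro i hi
  rcases hl with ⟨hl2, hl1⟩ | ⟨hl1, hl2⟩
  · -- l = (l₁, 0)
    rcases Nat.eq_zero_or_pos i with rfl | hipos
    · obtain ⟨B, φ, hBcard, hU'⟩ := spectral e α₁ α₂ τ U hU
      have hBt : B.card ≤ t := le_trans hBcard hω
      have hs1 : (s 0).1 ≤ t := by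
        by_contra hcon
        push_neg at hcon
        rcases Nat.lt_or_ge d 2 with hd | hd
        · have hd1 : (s 0).1 = 0 := by
            have : d = 1 := by omega
            simpa [this] using hlast1
          omega
        · obtain ⟨p, hpL, hpLP⟩ := annih1 T U B φ hU'
          refine hmax p (B.card, 0) hpLP ⟨0, by omega, ?_, ?_⟩ (hpL l)
          · show B.card + 1 ≤ (s 0).1
            omega
          · have := hmono2 0 1 (by omega) (by omega)
            show 0 + 1 ≤ (s 1).2
            omega
      exact axis_lemma T U t l (s 0) hl2 (by omega) hfirst2 hs1 B hBt φ hU' (f 0)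
        (hmem 0 hi).1 (hmem 0 hi).2
    · have h2 : 0 < (s i).2 := by
        have := hmono2 0 i hipos hi
        omega
      rw [recEval, if_neg (by intro h; omega)]
  · -- l = (0, l₂)
    rcases Nat.lt_or_ge i (d - 1) with hilt | hige
    · have h1 : 0 < (s i).1 := by
        have := hmono1 i (d - 1) hilt (by omega)
        omega
      rw [recEval, if_neg (by intro h; omega)]
    · have hieq : i = d - 1 := by omega
      subst hieq
      have hsw : ∀ n : ℕ × ℕ, (fun x => U x.swap) n
          = evalAt (Fswap e) (α₂ ^ (τ.swap.1 + n.1)) (α₁ ^ (τ.swap.2 + n.2)) := by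
        intro n
        show U n.swap = _
        rw [hU n.swap, ← evalAt_Fswap]
        rfl
      obtain ⟨B, φ, hBcard, hU'⟩ := spectral (Fswap e) α₂ α₁ τ.swap (fun x => U x.swap) hsw
      have hBt : B.card ≤ t := by
        have hcm : (Fswap e).coeff.support.card = e.coeff.support.card := by
          rw [Fswap_support, Finset.card_map]
        omega
      have hFF : ∀ g : AddMonoidAlgebra L (ℕ × ℕ), Fswap (Fswap g) = g := by
        intro g
        ext m
        rw [Fswap_apply, Fswap_apply]
        simp
      have hs2t : (s (d - 1)).2 ≤ t := by
        by_contra hcon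
        push_neg at hcon
        rcases Nat.lt_or_ge d 2 with hd | hd
        · have hd1 : (s (d - 1)).2 = 0 := by
            have hd' : d = 1 := by omega
            simpa [hd'] using hfirst2
          omega
        · obtain ⟨p, hpL, hpLP⟩ := annih1 (swapT T) (fun x => U x.swap) B φ hU'
          have hq' : Fswap p ∈ Lambda T U l := by
            apply lambda_of_swap
            rw [hFF]
            exact hpL l.swap
          have hqLP : IsLP T (Fswap p) (0, B.card) := by
            have h := isLP_of_swap (f := Fswap p) (s := ((B.card : ℕ), (0 : ℕ)))
              (by rw [hFF]; exact hpLP)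
            simpa using h
          refine absurd hq' (hmax (Fswap p) (0, B.card) hqLP ⟨d - 2, by omega, ?_, ?_⟩)
          · have := hmono1 (d - 2) (d - 1) (by omega) (by omega)
            show 0 + 1 ≤ (s (d - 2)).1
            omega
          · have hde : d - 2 + 1 = d - 1 := by omega
            rw [hde]
            show B.card + 1 ≤ (s (d - 1)).2
            omega
      rw [← recEval_swap U (f (d - 1)) (s (d - 1)) l]
      exact axis_lemma (swapT T) (fun x => U x.swap) t l.swap (s (d - 1)).swap
        (by simpa using hl1) (by simp only [Prod.fst_swap]; omega)
        (by simpa using hlast1) (by simpa using hs2t) B hBt φ hU' (Fswap (f (d - 1)))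
        (lambda_swap_of (hmem (d - 1) hi).1) (isLP_swap_of (hmem (d - 1) hi).2)
end

section
/- Let U be the syndrome table afforded by e and τ, with ω(e) ≤ t, 1 ≤ t ≤ ⌊r₁/2⌋ and t ≤ ⌊r₂/2⌋. Let l = (l₁, l₂) ∈ ℕ×ℕ with l₁ ≠ 0, l₂ ≠ 0 and l₁ + l₂ > t, and let F be a minimal set of polynomials for u^l. Then f[U]_l = 0 for every f ∈ F. -/
section Aux

open Finset

variable {L : Type*} [Field L]

lemma exists_T_max (T : MonomialOrder2) (A : Finset (ℕ × ℕ)) (hA : A.Nonempty) :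
    ∃ w ∈ A, ∀ m ∈ A, T.le m w := by
  induction hA using Finset.Nonempty.cons_induction with
  | singleton a => exact ⟨a, by simp, by simp [T.le_refl]⟩
  | cons a A ha hA ih =>
    obtain ⟨w, hw, hmax⟩ := ih
    rcases T.le_total a w with h | h
    · exact ⟨w, by simp [hw], by
        intro m hm
        rcases Finset.mem_cons.mp hm with rfl | hm
        · exact h
        · exact hmax m hm⟩
    · exact ⟨a, by simp, by
        intro m hm
        rcases Finset.mem_cons.mp hm with rfl | hm
        · exact T.le_refl m
        · exact T.le_trans _ _ _ (hmax m hm) h⟩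

lemma key_lemma (T : MonomialOrder2) (U : ℕ × ℕ → L) (l : ℕ × ℕ)
    (f : AddMonoidAlgebra L (ℕ × ℕ)) (sf : ℕ × ℕ) (hf : f ∈ Lambda T U l)
    (hLP : IsLP T f sf) (hs1 : sf.1 ≤ l.1) (hs2 : sf.2 ≤ l.2)
    (hc : recEval U f sf l ≠ 0)
    (h : AddMonoidAlgebra L (ℕ × ℕ)) (w : ℕ × ℕ) (hw : IsLP T h w)
    (hval : ∀ n : ℕ × ℕ, w.1 ≤ n.1 → w.2 ≤ n.2 →
      ∑ m ∈ h.coeff.support, h.coeff m * U (m + n - w) = 0)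
    (hw1 : w.1 + sf.1 ≤ l.1) (hw2 : w.2 + sf.2 ≤ l.2) : False := by
  classical
  have key1 : ∀ m ∈ h.coeff.support, m ≠ w →
      ∑ k ∈ f.coeff.support, f.coeff k * U (k + ((l.1 - w.1 + m.1, l.2 - w.2 + m.2) : ℕ × ℕ) - sf) = 0 := by
    intro m hm hmw
    set n : ℕ × ℕ := (l.1 - w.1 + m.1, l.2 - w.2 + m.2) with hn
    have h1 : sf.1 ≤ n.1 := by simp only [hn]; omega
    have h2 : sf.2 ≤ n.2 := by simp only [hn]; omega
    have hlt : T.lt n l := by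
      constructor
      · have := T.add_right m w (l.1 - w.1, l.2 - w.2) (hw.2 m hm)
        have e1 : m + ((l.1 - w.1, l.2 - w.2) : ℕ × ℕ) = n := by
          simp only [Prod.ext_iff, Prod.fst_add, Prod.snd_add, hn]; omega
        have e2 : w + ((l.1 - w.1, l.2 - w.2) : ℕ × ℕ) = l := by
          simp only [Prod.ext_iff, Prod.fst_add, Prod.snd_add]; omega
        rwa [e1, e2] at this
      · intro hnl
        apply hmw
        have : n.1 = l.1 ∧ n.2 = l.2 := by rw [hnl]; exact ⟨rfl, rfl⟩
        simp only [hn] at this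
        have : m.1 = w.1 ∧ m.2 = w.2 := by omega
        exact Prod.ext this.1 this.2
    have hv := hf.2 sf n hLP h1 h2 hlt
    rwa [recEval, if_pos ⟨h1, h2⟩] at hv
  have D1 : ∑ m ∈ h.coeff.support, h.coeff m *
      (∑ k ∈ f.coeff.support, f.coeff k * U (k + ((l.1 - w.1 + m.1, l.2 - w.2 + m.2) : ℕ × ℕ) - sf))
      = h.coeff w * recEval U f sf l := by
    rw [Finset.sum_eq_single w]
    · have e1 : ((l.1 - w.1 + w.1, l.2 - w.2 + w.2) : ℕ × ℕ) = l := by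
        simp only [Prod.ext_iff]; omega
      rw [e1, recEval, if_pos ⟨hs1, hs2⟩]
    · intro m hm hmw
      rw [key1 m hm hmw, mul_zero]
    · intro hns
      rw [Finsupp.notMem_support_iff.mp hns, zero_mul]
  have D2 : ∑ m ∈ h.coeff.support, h.coeff m *
      (∑ k ∈ f.coeff.support, f.coeff k * U (k + ((l.1 - w.1 + m.1, l.2 - w.2 + m.2) : ℕ × ℕ) - sf))
      = 0 := by
    have harg : ∀ k m : ℕ × ℕ,
        k + ((l.1 - w.1 + m.1, l.2 - w.2 + m.2) : ℕ × ℕ) - sf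
          = m + ((k.1 + l.1 - sf.1, k.2 + l.2 - sf.2) : ℕ × ℕ) - w := by
      intro k m
      simp only [Prod.ext_iff, Prod.fst_sub, Prod.snd_sub, Prod.fst_add, Prod.snd_add]
      constructor <;> omega
    calc ∑ m ∈ h.coeff.support, h.coeff m *
          (∑ k ∈ f.coeff.support, f.coeff k * U (k + ((l.1 - w.1 + m.1, l.2 - w.2 + m.2) : ℕ × ℕ) - sf))
        = ∑ m ∈ h.coeff.support, ∑ k ∈ f.coeff.support,
            h.coeff m * (f.coeff k * U (k + ((l.1 - w.1 + m.1, l.2 - w.2 + m.2) : ℕ × ℕ) - sf)) := by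
          simp_rw [Finset.mul_sum]
      _ = ∑ k ∈ f.coeff.support, ∑ m ∈ h.coeff.support,
            h.coeff m * (f.coeff k * U (k + ((l.1 - w.1 + m.1, l.2 - w.2 + m.2) : ℕ × ℕ) - sf)) :=
          Finset.sum_comm
      _ = ∑ k ∈ f.coeff.support, f.coeff k * ∑ m ∈ h.coeff.support,
            h.coeff m * U (m + ((k.1 + l.1 - sf.1, k.2 + l.2 - sf.2) : ℕ × ℕ) - w) := by
          refine Finset.sum_congr rfl fun k _ => ?_
          rw [Finset.mul_sum]
          refine Finset.sum_congr rfl fun m _ => ?_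
          rw [harg k m]; ring
      _ = 0 := by
          refine Finset.sum_eq_zero fun k _ => ?_
          rw [hval (k.1 + l.1 - sf.1, k.2 + l.2 - sf.2) (by simp; omega) (by simp; omega),
            mul_zero]
  rw [D2] at D1
  rcases mul_eq_zero.mp D1.symm with h0 | h0
  · exact Finsupp.mem_support_iff.mp hw.1 h0
  · exact hc h0

end Aux

section Card

open Finset

lemma rect_inter (p q r u : ℕ) :
    (range p ×ˢ range q) ∩ (range r ×ˢ range u) = range (min p r) ×ˢ range (min q u) := by
  ext ⟨x, y⟩
  simp only [Finset.mem_inter, Finset.mem_product, Finset.mem_range]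
  omega

lemma union2_card (p q r u : ℕ) :
    ((range p ×ˢ range q) ∪ (range r ×ˢ range u)).card + min p r * min q u = p * q + r * u := by
  have h := Finset.card_union_add_card_inter (range p ×ˢ range q) (range r ×ˢ range u)
  rwa [rect_inter, Finset.card_product, Finset.card_product, Finset.card_product,
    Finset.card_range, Finset.card_range, Finset.card_range, Finset.card_range,
    Finset.card_range, Finset.card_range] at h

lemma arith3 (a b c e : ℕ) (h1 : 1 ≤ a + c) (h2 : 1 ≤ b + e) :
    a + b + c + e + a*b + min (a+1) (c+1) * min b (e+1) + min a (c+1) * min (b+1) (e+1)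
      ≤ (a+1)*b + a*(b+1) + (c+1)*(e+1) + min a (c+1) * min b (e+1) := by
  rcases le_or_gt a c with hac | hac <;> rcases le_or_gt b e with hbe | hbe
  · rw [min_eq_left (by omega : a+1 ≤ c+1), min_eq_left (by omega : a ≤ c+1),
      min_eq_left (by omega : b ≤ e+1), min_eq_left (by omega : b+1 ≤ e+1)]
    obtain ⟨c', rfl⟩ : ∃ c', c = c' + 1 := ⟨c - 1, by omega⟩
    obtain ⟨e', rfl⟩ : ∃ e', e = e' + 1 := ⟨e - 1, by omega⟩
    nlinarith
  · rw [min_eq_left (by omega : a+1 ≤ c+1), min_eq_left (by omega : a ≤ c+1),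
      min_eq_right (by omega : e+1 ≤ b), min_eq_right (by omega : e+1 ≤ b+1)]
    rcases Nat.eq_zero_or_pos a with rfl | ha
    · nlinarith
    · nlinarith [Nat.mul_le_mul_left a (show e+1 ≤ b by omega)]
  · rw [min_eq_right (by omega : c+1 ≤ a+1), min_eq_right (by omega : c+1 ≤ a),
      min_eq_left (by omega : b ≤ e+1), min_eq_left (by omega : b+1 ≤ e+1)]
    rcases Nat.eq_zero_or_pos b with rfl | hb
    · nlinarith
    · nlinarith [Nat.mul_le_mul_left b (show c+1 ≤ a by omega)]
  · rw [min_eq_right (by omega : c+1 ≤ a+1), min_eq_right (by omega : c+1 ≤ a),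
      min_eq_right (by omega : e+1 ≤ b), min_eq_right (by omega : e+1 ≤ b+1)]
    nlinarith [Nat.mul_le_mul (show c+1 ≤ a by omega) (show e+1 ≤ b by omega)]

lemma card3 (a b c e : ℕ) (h1 : 1 ≤ a + c) (h2 : 1 ≤ b + e) :
    a + b + c + e ≤
      (((range (a+1) ×ˢ range b) ∪ (range a ×ˢ range (b+1))) ∪ (range (c+1) ×ˢ range (e+1))).card := by
  have hXY := union2_card (a+1) b a (b+1)
  rw [min_eq_right (by omega : a ≤ a+1), min_eq_left (by omega : b ≤ b+1)] at hXY
  have htot := Finset.card_union_add_card_inter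
    ((range (a+1) ×ˢ range b) ∪ (range a ×ˢ range (b+1))) (range (c+1) ×ˢ range (e+1))
  rw [Finset.union_inter_distrib_right, rect_inter, rect_inter, Finset.card_product,
    Finset.card_range, Finset.card_range] at htot
  have hI := union2_card (min (a+1) (c+1)) (min b (e+1)) (min a (c+1)) (min (b+1) (e+1))
  rw [show min (min (a+1) (c+1)) (min a (c+1)) = min a (c+1) by omega,
      show min (min b (e+1)) (min (b+1) (e+1)) = min b (e+1) by omega] at hI
  have harith := arith3 a b c e h1 h2
  generalize hP1 : (a+1)*b = P1 at hXY harith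
  generalize hP2 : a*(b+1) = P2 at hXY harith
  generalize hP3 : a*b = P3 at hXY harith
  generalize hP4 : (c+1)*(e+1) = P4 at htot harith
  generalize hP5 : min (a+1) (c+1) * min b (e+1) = P5 at hI harith
  generalize hP6 : min a (c+1) * min (b+1) (e+1) = P6 at hI harith
  generalize hP7 : min a (c+1) * min b (e+1) = P7 at hI harith
  omega

end Card

/-- if `l₁ ≠ 0`, `l₂ ≠ 0` and `l₁ + l₂ > t`, then `f[U]_l = 0`
for every `f` in a minimal set for `u^l`. -/
theorem stmt_11 (T : MonomialOrder2) {F L : Type*} [Field F] [Fintype F] [Field L]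
    [Algebra F L] (r₁ r₂ t : ℕ) (ht : 1 ≤ t) (ht₁ : t ≤ r₁ / 2) (ht₂ : t ≤ r₂ / 2)
    (hq : Nat.Coprime (r₁ * r₂) (Fintype.card F))
    (α₁ α₂ : L) (hα₁ : IsPrimitiveRoot α₁ r₁) (hα₂ : IsPrimitiveRoot α₂ r₂)
    (e : AddMonoidAlgebra F (ℕ × ℕ)) (he : ↑e.coeff.support ⊆ Ibox r₁ r₂)
    (hω : e.coeff.support.card ≤ t)
    (τ : ℕ × ℕ) (hτ : τ ∈ Ibox r₁ r₂) (U : ℕ × ℕ → L)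
    (hU : ∀ n : ℕ × ℕ, U n = evalAt e (α₁ ^ (τ.1 + n.1)) (α₂ ^ (τ.2 + n.2)))
    (l : ℕ × ℕ) (hl1 : l.1 ≠ 0) (hl2 : l.2 ≠ 0) (hlt : t < l.1 + l.2)
    (d : ℕ) (s : ℕ → ℕ × ℕ) (f : ℕ → AddMonoidAlgebra L (ℕ × ℕ))
    (hmin : IsMinimalSet T U l d s f) :
    ∀ i, i < d → recEval U (f i) (s i) l = 0 := by
  classical
  intro i hi
  by_contra hc
  obtain ⟨hdef, hmem, hminimal⟩ := hmin
  obtain ⟨hfi, hLPi⟩ := hmem i hi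
  have hsl : (s i).1 ≤ l.1 ∧ (s i).2 ≤ l.2 := by
    by_contra hcon
    rw [recEval, if_neg hcon] at hc
    exact hc rfl
  set S : Finset (ℕ × ℕ) :=
    ((Finset.range ((s i).1+1) ×ˢ Finset.range (s i).2) ∪
     (Finset.range (s i).1 ×ˢ Finset.range ((s i).2+1))) ∪
    (Finset.range (l.1 - (s i).1 + 1) ×ˢ Finset.range (l.2 - (s i).2 + 1)) with hSdef
  have hScard : l.1 + l.2 ≤ S.card := by
    have hcard := card3 (s i).1 (s i).2 (l.1 - (s i).1) (l.2 - (s i).2)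
      (by omega) (by omega)
    rw [← hSdef] at hcard
    omega
  -- linear algebra: find a nonzero polynomial supported in S vanishing at all error points
  set M : Matrix e.coeff.support S L :=
    fun p m => ((α₁ ^ (p : ℕ × ℕ).1) ^ (m : ℕ × ℕ).1) * ((α₂ ^ (p : ℕ × ℕ).2) ^ (m : ℕ × ℕ).2)
    with hM
  have hninj : ¬ Function.Injective M.mulVecLin := by
    intro hinj
    have h1 := LinearMap.finrank_le_finrank_of_injective hinj
    rw [Module.finrank_fintype_fun_eq_card, Module.finrank_fintype_fun_eq_card,
      Fintype.card_coe, Fintype.card_coe] at h1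
    omega
  obtain ⟨x, y, hxy, hne⟩ := Function.not_injective_iff.mp hninj
  set v : S → L := x - y with hv
  have hv0 : v ≠ 0 := sub_ne_zero.mpr hne
  have hMv : ∀ p : e.coeff.support, ∑ m : S, M p m * v m = 0 := by
    intro p
    have h0 : M.mulVecLin v = 0 := by rw [hv, map_sub, hxy, sub_self]
    have h1 := congrFun h0 p
    simpa [Matrix.mulVecLin_apply, Matrix.mulVec, dotProduct] using h1
  set g : ℕ × ℕ → L := fun m => if hm : m ∈ S then v ⟨m, hm⟩ else 0 with hg
  have hgsupp : ∀ a, g a ≠ 0 → a ∈ S := by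
    intro a ha
    by_contra hna
    simp [hg, dif_neg hna] at ha
  set hp : AddMonoidAlgebra L (ℕ × ℕ) := AddMonoidAlgebra.ofCoeff (Finsupp.onFinset S g hgsupp) with hhp
  have hsupp : hp.coeff.support ⊆ S := Finsupp.support_onFinset_subset (hf := hgsupp)
  have happ : ∀ m (hm : m ∈ S), hp.coeff m = v ⟨m, hm⟩ := by
    intro m hm
    simp [hhp, AddMonoidAlgebra.coeff_ofCoeff, Finsupp.onFinset_apply, hg, dif_pos hm]
  have hpne : hp ≠ 0 := by
    obtain ⟨m, hm⟩ := Function.ne_iff.mp hv0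
    intro h0
    apply hm
    have h1 := happ (↑m) m.2
    rw [h0] at h1
    simpa using h1.symm
  have hvan : ∀ p ∈ e.coeff.support,
      ∑ m ∈ hp.coeff.support, hp.coeff m * ((α₁ ^ p.1) ^ m.1 * (α₂ ^ p.2) ^ m.2) = 0 := by
    intro p hpmem
    have h1 : ∑ m ∈ hp.coeff.support, hp.coeff m * ((α₁ ^ p.1) ^ m.1 * (α₂ ^ p.2) ^ m.2)
        = ∑ m ∈ S, hp.coeff m * ((α₁ ^ p.1) ^ m.1 * (α₂ ^ p.2) ^ m.2) :=
      Finset.sum_subset hsupp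
        (fun m _ hnm => by rw [Finsupp.notMem_support_iff.mp hnm, zero_mul])
    rw [h1, ← Finset.sum_attach S (fun m => hp.coeff m * ((α₁ ^ p.1) ^ m.1 * (α₂ ^ p.2) ^ m.2))]
    calc ∑ m ∈ S.attach, hp.coeff ↑m * ((α₁ ^ p.1) ^ (↑m : ℕ × ℕ).1 * (α₂ ^ p.2) ^ (↑m : ℕ × ℕ).2)
        = ∑ m : S, M ⟨p, hpmem⟩ m * v m := by
          rw [Finset.univ_eq_attach]
          refine Finset.sum_congr rfl fun m _ => ?_
          rw [happ (↑m) m.2, hM]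
          simp only [Subtype.coe_eta]
          ring
      _ = 0 := hMv ⟨p, hpmem⟩
  have hfull : ∀ s' n : ℕ × ℕ, s'.1 ≤ n.1 → s'.2 ≤ n.2 →
      ∑ m ∈ hp.coeff.support, hp.coeff m * U (m + n - s') = 0 := by
    intro s' n h1 h2
    have hUm : ∀ m : ℕ × ℕ, U (m + n - s') = ∑ p ∈ e.coeff.support,
        (algebraMap F L (e.coeff p) * (α₁ ^ (τ.1 + (n.1 - s'.1))) ^ p.1
          * (α₂ ^ (τ.2 + (n.2 - s'.2))) ^ p.2)
          * ((α₁ ^ p.1) ^ m.1 * (α₂ ^ p.2) ^ m.2) := by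
      intro m
      rw [hU]
      simp only [evalAt]
      refine Finset.sum_congr rfl fun p _ => ?_
      have e1 : (m + n - s').1 = m.1 + (n.1 - s'.1) := by
        simp only [Prod.fst_sub, Prod.fst_add]; omega
      have e2 : (m + n - s').2 = m.2 + (n.2 - s'.2) := by
        simp only [Prod.snd_sub, Prod.snd_add]; omega
      rw [e1, e2, ← pow_mul, ← pow_mul, ← pow_mul, ← pow_mul, ← pow_mul, ← pow_mul]
      rw [show (τ.1 + (m.1 + (n.1 - s'.1))) * p.1
            = (τ.1 + (n.1 - s'.1)) * p.1 + p.1 * m.1 by ring,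
          show (τ.2 + (m.2 + (n.2 - s'.2))) * p.2
            = (τ.2 + (n.2 - s'.2)) * p.2 + p.2 * m.2 by ring,
          pow_add, pow_add]
      ring
    calc ∑ m ∈ hp.coeff.support, hp.coeff m * U (m + n - s')
        = ∑ m ∈ hp.coeff.support, ∑ p ∈ e.coeff.support,
            (algebraMap F L (e.coeff p) * (α₁ ^ (τ.1 + (n.1 - s'.1))) ^ p.1
              * (α₂ ^ (τ.2 + (n.2 - s'.2))) ^ p.2)
            * (hp.coeff m * ((α₁ ^ p.1) ^ m.1 * (α₂ ^ p.2) ^ m.2)) := by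
          refine Finset.sum_congr rfl fun m _ => ?_
          rw [hUm m, Finset.mul_sum]
          refine Finset.sum_congr rfl fun p _ => ?_
          ring
      _ = ∑ p ∈ e.coeff.support,
            (algebraMap F L (e.coeff p) * (α₁ ^ (τ.1 + (n.1 - s'.1))) ^ p.1
              * (α₂ ^ (τ.2 + (n.2 - s'.2))) ^ p.2)
            * ∑ m ∈ hp.coeff.support, hp.coeff m * ((α₁ ^ p.1) ^ m.1 * (α₂ ^ p.2) ^ m.2) := by
          rw [Finset.sum_comm]
          exact Finset.sum_congr rfl fun p _ => (Finset.mul_sum _ _ _).symm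
      _ = 0 := Finset.sum_eq_zero fun p hp' => by rw [hvan p hp', mul_zero]
  obtain ⟨w, hwmem, hwmax⟩ := exists_T_max T hp.coeff.support (Finsupp.support_nonempty_iff.mpr (mt AddMonoidAlgebra.coeff_eq_zero.mp hpne))
  have hLPh : IsLP T hp w := ⟨hwmem, hwmax⟩
  have hhLam : hp ∈ Lambda T U l := by
    refine ⟨hpne, fun s' n _ h1 h2 _ => ?_⟩
    rw [recEval, if_pos ⟨h1, h2⟩]
    exact hfull s' n h1 h2
  have hwS := hsupp hwmem
  rw [hSdef] at hwS
  simp only [Finset.mem_union, Finset.mem_product, Finset.mem_range] at hwS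
  rcases hwS with (⟨hw1, hw2⟩ | ⟨hw1, hw2⟩) | ⟨hw1, hw2⟩
  · -- w ∈ [0, s₁] × [0, s₂ - 1] ⊆ Δ(F)
    have hi0 : i ≠ 0 := by
      intro h0
      rw [h0, hdef.2.2.2.2] at hw2
      omega
    refine hminimal hp w hLPh ⟨i - 1, by omega, ?_, ?_⟩ hhLam
    · have := hdef.2.1 (i - 1) i (by omega) hi
      omega
    · rw [show i - 1 + 1 = i by omega]
      omega
  · -- w ∈ [0, s₁ - 1] × [0, s₂] ⊆ Δ(F)
    have hid : i ≠ d - 1 := by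
      intro h0
      rw [h0, hdef.2.2.2.1] at hw1
      omega
    refine hminimal hp w hLPh ⟨i, by omega, by omega, ?_⟩ hhLam
    have := hdef.2.2.1 i (i + 1) (by omega) (by omega)
    omega
  · -- w ⪯ l - s i : contradiction with the key lemma
    exact key_lemma T U l (f i) (s i) hfi hLPi hsl.1 hsl.2 hc hp w hLPh
      (fun n => hfull w n) (by omega) (by omega)
end
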